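/- Let (aᵢ) be a nondecreasing finite sequence of positive reals, and let 0 < q < 1. Then ∑_{i=0}^{n-1} aᵢ (aᵢ^{q-1} - a_{i+1}^{q-1}) ≤ ((1-q)/q) · aₙ^q. -/

import Mathlib

lemma fin_telescope (n : ℕ) (g : Fin (n + 1) → ℝ) :
    ∑ i : Fin n, (g i.succ - g i.castSucc) = g (Fin.last n) - g 0 := by
  induction n with
  | zero => simp
  | succ m ih =>
    rw [Fin.sum_univ_castSucc]
    have := ih (fun i => g i.castSucc)
    simp only [Fin.succ_castSucc]
    rw [this]
    simp [Fin.succ_last]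

lemma key_ineq (q x y : ℝ) (hq0 : 0 < q) (hq1 : q < 1) (hx : 0 < x) (hxy : x ≤ y) :
    x * (x ^ (q - 1) - y ^ (q - 1)) ≤ (1 - q) / q * (y ^ q - x ^ q) := by
  have hy : 0 < y := hx.trans_le hxy
  have hs : (-1 : ℝ) ≤ x / y - 1 := by
    have : 0 ≤ x / y := by positivity
    linarith
  have h := rpow_one_add_le_one_add_mul_self hs hq0.le hq1.le
  rw [show 1 + (x / y - 1) = x / y by ring] at h
  rw [Real.div_rpow hx.le hy.le] at h
  have hyq : y ^ (q - 1) * y = y ^ q := by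
    rw [← Real.rpow_add_one hy.ne']; ring_nf
  have hxq : x * x ^ (q - 1) = x ^ q := by
    rw [mul_comm, ← Real.rpow_add_one hx.ne']; ring_nf
  have hyqpos : (0 : ℝ) < y ^ q := Real.rpow_pos_of_pos hy q
  have hxqpos : (0 : ℝ) < x ^ q := Real.rpow_pos_of_pos hx q
  -- from h : x^q / y^q ≤ 1 + q * (x/y - 1)
  have h2 : x ^ q ≤ y ^ q + q * (x * y ^ (q - 1) - y ^ q) := by
    have h3 : x ^ q ≤ (1 + q * (x / y - 1)) * y ^ q := by
      rw [← div_le_iff₀ hyqpos]; exact h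
    have hxy' : x / y * y ^ q = x * y ^ (q - 1) := by
      rw [← hyq, ← mul_assoc, mul_right_comm, div_mul_cancel₀ x hy.ne']
    nlinarith [hxy']
  rw [div_mul_eq_mul_div, le_div_iff₀ hq0]
  nlinarith [hxq]

theorem stmt_3 (n : ℕ) (a : Fin (n + 1) → ℝ) (ha : Monotone a) (hpos : ∀ i, 0 < a i)
    (q : ℝ) (hq0 : 0 < q) (hq1 : q < 1) :
    ∑ i : Fin n, a i.castSucc * (a i.castSucc ^ (q - 1) - a i.succ ^ (q - 1)) ≤
      (1 - q) / q * a (Fin.last n) ^ q := by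
  have step : ∑ i : Fin n, a i.castSucc * (a i.castSucc ^ (q - 1) - a i.succ ^ (q - 1)) ≤
      ∑ i : Fin n, ((fun j => (1 - q) / q * a j ^ q) i.succ
        - (fun j => (1 - q) / q * a j ^ q) i.castSucc) := by
    apply Finset.sum_le_sum
    intro i _
    have := key_ineq q (a i.castSucc) (a i.succ) hq0 hq1 (hpos _)
      (ha (Fin.castSucc_le_succ i))
    simpa [mul_sub] using this
  rw [fin_telescope n (fun j => (1 - q) / q * a j ^ q)] at step
  have h0 : 0 ≤ (1 - q) / q * a 0 ^ q := by
    exact mul_nonneg (div_nonneg (by linarith) hq0.le) (Real.rpow_pos_of_pos (hpos 0) q).le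
  linarith
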